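/- The complete graph K_n is determined by its reciprocal distance Laplacian spectrum: if G is a connected graph on n vertices whose RD^L-spectrum equals {0, n^{(n−1)}}, then G ≅ K_n. -/

import Mathlib

open Matrix Polynomial

/-- The reciprocal distance (Harary) matrix of a graph: `(i,j)`-entry is `1/d(i,j)`
for `i ≠ j` and `0` on the diagonal. -/
noncomputable def RD {V : Type*} [Fintype V] [DecidableEq V] (G : SimpleGraph V) :
    Matrix V V ℝ :=
  fun u v => if u = v then 0 else ((G.dist u v : ℝ))⁻¹

/-- The reciprocal distance degree of a vertex: `RTr(v) = ∑_{u ≠ v} 1/d(v,u)`. -/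
noncomputable def RTr {V : Type*} [Fintype V] [DecidableEq V] (G : SimpleGraph V) (v : V) : ℝ :=
  ∑ u, RD G v u

/-- The reciprocal distance Laplacian matrix `RD^L(G) = RT(G) - RD(G)`. -/
noncomputable def RDL {V : Type*} [Fintype V] [DecidableEq V] (G : SimpleGraph V) :
    Matrix V V ℝ :=
  Matrix.diagonal (RTr G) - RD G

/-- `e : Fin n → ℝ` enumerates the eigenvalues of `M` in (weakly) decreasing order,
with multiplicities, where the eigenvalues (with multiplicity) are the roots of the
characteristic polynomial. -/
def IsEigEnum {V : Type*} [Fintype V] [DecidableEq V] (M : Matrix V V ℝ)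
    (e : Fin (Fintype.card V) → ℝ) : Prop :=
  Antitone e ∧ (↑(List.ofFn e) : Multiset ℝ) = M.charpoly.roots

theorem stmt19 {V : Type*} [Fintype V] [DecidableEq V] (G : SimpleGraph V)
    (hc : G.Connected)
    (hspec : (RDL G).charpoly.roots =
      0 ::ₘ Multiset.replicate (Fintype.card V - 1) ((Fintype.card V : ℝ))) :
    G = (⊤ : SimpleGraph V) := by
  cases isEmpty_or_nonempty V with
  | inl h => ext u v; exact (h.false u).elim
  | inr h =>
    have hn : 1 ≤ Fintype.card V := Fintype.card_pos
    set n := Fintype.card V with hn_def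
    -- roots card = natDegree, hence splits
    have hdeg : (RDL G).charpoly.natDegree = n := Matrix.charpoly_natDegree_eq_dim _
    have hcard : (RDL G).charpoly.roots.card = n := by
      rw [hspec]
      simp [Multiset.card_replicate, hn]
    have hsplits : (RDL G).charpoly.Splits := by
      rw [Polynomial.splits_iff_card_roots, hdeg]; exact hcard
    have htr : (RDL G).trace = (RDL G).charpoly.roots.sum :=
      Matrix.trace_eq_sum_roots_charpoly_of_splits hsplits
    have hsum : (RDL G).charpoly.roots.sum = (n - 1 : ℕ) * n := by
      rw [hspec]
      simp [Multiset.sum_replicate, nsmul_eq_mul]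
    -- trace = sum of RTr
    have htr2 : (RDL G).trace = ∑ v, ∑ u, RD G v u := by
      rw [show RDL G = Matrix.diagonal (RTr G) - RD G from rfl, Matrix.trace_sub,
        Matrix.trace_diagonal]
      have h0 : (RD G).trace = 0 := by
        simp [Matrix.trace, Matrix.diag, RD]
      rw [h0, sub_zero]
      simp [RTr]
    -- each entry bound
    have hent : ∀ v u : V, RD G v u ≤ if v = u then (0:ℝ) else 1 := by
      intro v u
      by_cases hvu : v = u
      · simp [RD, hvu]
      · simp only [RD, if_neg hvu]
        have hd : 1 ≤ G.dist v u := by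
          have := hc.pos_dist_of_ne hvu
          omega
        have : (1:ℝ) ≤ (G.dist v u : ℝ) := by exact_mod_cast hd
        rw [inv_le_one_iff₀]
        right; exact this
    by_contra hne
    -- there exist nonadjacent distinct vertices
    have : ∃ v u, v ≠ u ∧ ¬ G.Adj v u := by
      by_contra hforall
      push_neg at hforall
      apply hne
      ext v u
      simp only [SimpleGraph.top_adj]
      constructor
      · intro hadj; exact G.ne_of_adj hadj
      · intro hvu; exact hforall v u hvu
    obtain ⟨v, u, hvu, hnadj⟩ := this
    -- strict inequality at (v,u)
    have hstrict : RD G v u < if v = u then (0:ℝ) else 1 := by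
      simp only [RD, if_neg hvu]
      have hd : 2 ≤ G.dist v u := by
        have h1 : G.dist v u ≠ 1 := by
          intro h1
          exact hnadj ((G.dist_eq_one_iff_adj).mp h1)
        have := hc.pos_dist_of_ne hvu
        omega
      have h2 : (2:ℝ) ≤ (G.dist v u : ℝ) := by exact_mod_cast hd
      have hpos : (0:ℝ) < (G.dist v u : ℝ) := by linarith
      calc ((G.dist v u : ℝ))⁻¹ ≤ (2:ℝ)⁻¹ := by
            apply inv_anti₀ (by norm_num) h2
        _ < 1 := by norm_num
    have hlt : ∑ v, ∑ u, RD G v u < ∑ v : V, ∑ u : V, (if v = u then (0:ℝ) else 1) := by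
      rw [← Finset.sum_product', ← Finset.sum_product' (f := fun a b => RD G a b)]
      apply Finset.sum_lt_sum
      · intro p _; exact hent p.1 p.2
      · exact ⟨(v, u), Finset.mem_univ _, hstrict⟩
    have hrhs : ∑ v : V, ∑ u : V, (if v = u then (0:ℝ) else 1) = (n:ℝ) * ((n:ℝ) - 1) := by
      have hone : ∀ v : V, ∑ u : V, (if v = u then (0:ℝ) else 1) = (n:ℝ) - 1 := by
        intro v
        have he : ∑ u : V, (if v = u then (0:ℝ) else 1)
            = ∑ u : V, ((1:ℝ) - if v = u then (1:ℝ) else 0) := by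
          apply Finset.sum_congr rfl; intro u _; by_cases h : v = u <;> simp [h]
        rw [he, Finset.sum_sub_distrib, Finset.sum_const, Finset.sum_ite_eq]
        simp [hn_def]
      rw [Finset.sum_congr rfl (fun v _ => hone v), Finset.sum_const, hn_def]
      simp [nsmul_eq_mul]
    rw [Nat.cast_sub hn] at hsum
    push_cast at hsum
    rw [htr2] at htr
    rw [hrhs] at hlt
    rw [hsum] at htr
    nlinarith [hlt, htr]
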